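/- arXiv:2403.00737 — 2 statements merged into one kernel-verified Lean document; each statement's English description precedes it below -/
import Mathlib

section
/- Let S = {p₁, …, pₙ} ⊆ ℝ² be a set of n points in general position whose x-coordinates are strictly increasing in the index, and such that p₂, …, pₙ appear in counterclockwise order around p₁, i.e., for all 2 ≤ a < b ≤ n the triple (p₁, p_a, p_b) is positively oriented. Suppose there are indices 2 ≤ a < b < c < d < e ≤ n such that {p_a, p_b, p_c, p_d, p_e} is a 5-hole of S and each of p_b, p_c, p_d lies strictly below the line through p_a and p_e (i.e., the triples (p_a, p_b, p_e), (p_a, p_c, p_e) and (p_a, p_d, p_e) are all positively oriented). Then S contains a 6-hole. -/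
/-- Orientation determinant of three points in the plane:
`det [[1,1,1],[pₓ,qₓ,rₓ],[p_y,q_y,r_y]]`.
The triple `(p,q,r)` is positively oriented iff `det3 p q r > 0`,
and negatively oriented iff `det3 p q r < 0`. -/
noncomputable def det3 (p q r : ℝ × ℝ) : ℝ :=
  Matrix.det !![(1:ℝ), 1, 1; p.1, q.1, r.1; p.2, q.2, r.2]

/-- A set of points in the plane is in general position if no three
distinct points of it are collinear. -/
def InGenPos (S : Set (ℝ × ℝ)) : Prop :=
  ∀ p ∈ S, ∀ q ∈ S, ∀ r ∈ S, p ≠ q → p ≠ r → q ≠ r →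
    ¬ Collinear ℝ ({p, q, r} : Set (ℝ × ℝ))

/-- `P` is a `k`-gon of `S`: a `k`-element subset of `S` in convex position,
i.e. every point of `P` is an extreme point of the convex hull of `P`. -/
def IsGon (k : ℕ) (S P : Set (ℝ × ℝ)) : Prop :=
  P ⊆ S ∧ P.Finite ∧ P.ncard = k ∧
    ∀ p ∈ P, p ∈ Set.extremePoints ℝ (convexHull ℝ P)

/-- `P` is a `k`-hole of `S`: a `k`-gon of `S` whose convex hull contains
no point of `S` other than the `k` points of `P`. -/
def IsHole (k : ℕ) (S P : Set (ℝ × ℝ)) : Prop :=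
  IsGon k S P ∧ ∀ q ∈ S, q ∈ convexHull ℝ P → q ∈ P

lemma det3_eq (p q r : ℝ × ℝ) :
    det3 p q r = (q.1 - p.1) * (r.2 - p.2) - (r.1 - p.1) * (q.2 - p.2) := by
  simp [det3, Matrix.det_fin_three]; ring

lemma det3_cyc (p q r : ℝ × ℝ) : det3 p q r = det3 q r p := by
  simp only [det3_eq]; ring

lemma det3_swap (p q r : ℝ × ℝ) : det3 p q r = -det3 p r q := by
  simp only [det3_eq]; ring

lemma det3_self₁ (p q : ℝ × ℝ) : det3 p q p = 0 := by simp only [det3_eq]; ring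
lemma det3_self₂ (p q : ℝ × ℝ) : det3 p q q = 0 := by simp only [det3_eq]; ring

lemma det3_affine (u v x y : ℝ × ℝ) (α β : ℝ) (h : α + β = 1) :
    det3 u v (α • x + β • y) = α * det3 u v x + β * det3 u v y := by
  have hβ : β = 1 - α := by linarith
  subst hβ
  simp only [det3_eq, Prod.fst_add, Prod.snd_add, Prod.smul_fst, Prod.smul_snd,
    smul_eq_mul]
  ring

lemma convex_det_ge (u v : ℝ × ℝ) (c : ℝ) : Convex ℝ {x | c ≤ det3 u v x} := by
  intro x hx y hy α β hα hβ hαβ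
  simp only [Set.mem_setOf_eq] at *
  rw [det3_affine u v x y α β hαβ]
  have hβ' : β = 1 - α := by linarith
  subst hβ'
  nlinarith [mul_le_mul_of_nonneg_left hx hα, mul_le_mul_of_nonneg_left hy hβ]

lemma convex_det_le (u v : ℝ × ℝ) (c : ℝ) : Convex ℝ {x | det3 u v x ≤ c} := by
  intro x hx y hy α β hα hβ hαβ
  simp only [Set.mem_setOf_eq] at *
  rw [det3_affine u v x y α β hαβ]
  have hβ' : β = 1 - α := by linarith
  subst hβ'
  nlinarith [mul_le_mul_of_nonneg_left hx hα, mul_le_mul_of_nonneg_left hy hβ]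

lemma line_inter {u v w x : ℝ × ℝ} (h1 : det3 u v x = 0) (h2 : det3 v w x = 0)
    (hd : det3 u v w ≠ 0) : x = v := by
  have e1 : (x.1 - v.1) * det3 u v w =
      det3 u v x * (w.1 - v.1) - det3 v w x * (v.1 - u.1) := by
    simp only [det3_eq]; ring
  have e2 : (x.2 - v.2) * det3 u v w =
      det3 u v x * (w.2 - v.2) - det3 v w x * (v.2 - u.2) := by
    simp only [det3_eq]; ring
  rw [h1, h2] at e1 e2
  have hx1 : x.1 = v.1 := by
    rcases mul_eq_zero.mp (by linarith : (x.1 - v.1) * det3 u v w = 0) with h | h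
    · linarith
    · exact absurd h hd
  have hx2 : x.2 = v.2 := by
    rcases mul_eq_zero.mp (by linarith : (x.2 - v.2) * det3 u v w = 0) with h | h
    · linarith
    · exact absurd h hd
  exact Prod.ext hx1 hx2

lemma extreme_of_edges {P : Set (ℝ × ℝ)} {u v w : ℝ × ℝ} (hv : v ∈ P)
    (h1 : ∀ x ∈ P, 0 ≤ det3 u v x) (h2 : ∀ x ∈ P, 0 ≤ det3 v w x)
    (hd : det3 u v w ≠ 0) :
    v ∈ Set.extremePoints ℝ (convexHull ℝ P) := by
  have hc1 : convexHull ℝ P ⊆ {x | 0 ≤ det3 u v x} :=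
    convexHull_min h1 (convex_det_ge u v 0)
  have hc2 : convexHull ℝ P ⊆ {x | 0 ≤ det3 v w x} :=
    convexHull_min h2 (convex_det_ge v w 0)
  rw [mem_extremePoints]
  refine ⟨subset_convexHull ℝ P hv, ?_⟩
  intro x₁ hx₁ x₂ hx₂ hseg
  obtain ⟨α, β, hα, hβ, hαβ, hsum⟩ := hseg
  have k1 : α * det3 u v x₁ + β * det3 u v x₂ = 0 := by
    rw [← det3_affine u v x₁ x₂ α β hαβ, hsum, det3_self₂]
  have k2 : α * det3 v w x₁ + β * det3 v w x₂ = 0 := by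
    rw [← det3_affine v w x₁ x₂ α β hαβ, hsum, det3_self₁]
  have n1 := hc1 hx₁; have n2 := hc1 hx₂
  have n3 := hc2 hx₁; have n4 := hc2 hx₂
  simp only [Set.mem_setOf_eq] at n1 n2 n3 n4
  have z1 : det3 u v x₁ = 0 := by nlinarith [mul_nonneg hα.le n1, mul_nonneg hβ.le n2]
  have z2 : det3 v w x₁ = 0 := by nlinarith [mul_nonneg hα.le n3, mul_nonneg hβ.le n4]
  have z1' : det3 u v x₂ = 0 := by nlinarith [mul_nonneg hα.le n1, mul_nonneg hβ.le n2]
  have z2' : det3 v w x₂ = 0 := by nlinarith [mul_nonneg hα.le n3, mul_nonneg hβ.le n4]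
  exact ⟨line_inter z1 z2 hd, line_inter z1' z2' hd⟩

lemma collinear_of_det3 {p q r : ℝ × ℝ} (h : det3 p q r = 0) :
    Collinear ℝ ({p, q, r} : Set (ℝ × ℝ)) := by
  rw [det3_eq] at h
  by_cases hpq : q = p
  · subst hpq
    have : ({q, q, r} : Set (ℝ × ℝ)) = {q, r} := by simp
    rw [this]; exact collinear_pair ℝ q r
  · rw [collinear_iff_of_mem (Set.mem_insert p {q, r})]
    have comp : ∀ t : ℝ, t • (q - p) +ᵥ p =
        ((t * (q.1 - p.1) + p.1, t * (q.2 - p.2) + p.2) : ℝ × ℝ) := by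
      intro t
      apply Prod.ext <;>
        simp [Prod.smul_fst, Prod.smul_snd, Prod.fst_sub, Prod.snd_sub,
          Prod.fst_add, Prod.snd_add, smul_eq_mul]
    refine ⟨q - p, fun x hx => ?_⟩
    simp only [Set.mem_insert_iff, Set.mem_singleton_iff] at hx
    rcases hx with rfl | rfl | rfl
    · exact ⟨0, by simp⟩
    · exact ⟨1, by simp⟩
    · by_cases h1 : q.1 = p.1
      · have h2 : q.2 - p.2 ≠ 0 := fun h2 => hpq (Prod.ext (by linarith) (by linarith))
        have hx1 : x.1 = p.1 := by
          have hz : (x.1 - p.1) * (q.2 - p.2) = 0 := by rw [h1] at h; linarith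
          rcases mul_eq_zero.mp hz with h' | h'
          · linarith
          · exact absurd h' h2
        refine ⟨(x.2 - p.2) / (q.2 - p.2), ?_⟩
        rw [comp, Prod.ext_iff]
        constructor
        · simp only []
          rw [h1, hx1]; ring
        · simp only []
          field_simp; ring
      · have h1' : q.1 - p.1 ≠ 0 := fun hh => h1 (by linarith)
        refine ⟨(x.1 - p.1) / (q.1 - p.1), ?_⟩
        rw [comp, Prod.ext_iff]
        constructor
        · simp only []
          field_simp; ring
        · simp only []
          field_simp
          linear_combination h

lemma sandwich {P : Set (ℝ × ℝ)} {v m g : ℝ × ℝ}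
    (hv : v ∈ Set.extremePoints ℝ (convexHull ℝ P))
    (hm : m ∈ convexHull ℝ P) (hg : g ∈ convexHull ℝ P)
    (hx1 : m.1 = v.1) (hx2 : g.1 = v.1)
    (hy1 : m.2 < v.2) (hy2 : v.2 < g.2) : False := by
  rw [mem_extremePoints] at hv
  obtain ⟨-, hext⟩ := hv
  have hgm : g.2 - m.2 > 0 := by linarith
  have hseg : v ∈ openSegment ℝ m g := by
    refine ⟨(g.2 - v.2) / (g.2 - m.2), (v.2 - m.2) / (g.2 - m.2),
      div_pos (by linarith) hgm, div_pos (by linarith) hgm, by field_simp; ring, ?_⟩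
    apply Prod.ext
    · simp only [Prod.fst_add, Prod.smul_fst, smul_eq_mul, hx1, hx2]
      field_simp; ring
    · simp only [Prod.snd_add, Prod.smul_snd, smul_eq_mul]
      field_simp; ring
  have := hext m hm g hg hseg
  have : m.2 = v.2 := by rw [this.1]
  linarith

lemma segpt (u w : ℝ × ℝ) (x0 : ℝ) (h1 : u.1 < x0) (h2 : x0 < w.1) :
    ∃ m ∈ segment ℝ u w, m.1 = x0 ∧
      m.2 * (w.1 - u.1) = u.2 * (w.1 - x0) + w.2 * (x0 - u.1) := by
  have hwu : w.1 - u.1 > 0 := by linarith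
  set t := (x0 - u.1) / (w.1 - u.1) with ht
  have ht0 : 0 ≤ t := le_of_lt (div_pos (by linarith) hwu)
  have ht1 : t ≤ 1 := by rw [ht, div_le_one hwu]; linarith
  refine ⟨(1 - t) • u + t • w, ⟨1 - t, t, by linarith, ht0, by ring, rfl⟩, ?_, ?_⟩
  · simp only [Prod.fst_add, Prod.smul_fst, smul_eq_mul]
    rw [ht]; field_simp; ring
  · simp only [Prod.snd_add, Prod.smul_snd, smul_eq_mul]
    rw [ht]; field_simp; ring

lemma mid_pos {P : Set (ℝ × ℝ)} {u v w A E : ℝ × ℝ}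
    (hv : v ∈ Set.extremePoints ℝ (convexHull ℝ P))
    (hu : u ∈ convexHull ℝ P) (hw : w ∈ convexHull ℝ P)
    (hA : A ∈ convexHull ℝ P) (hE : E ∈ convexHull ℝ P)
    (hx1 : u.1 < v.1) (hx2 : v.1 < w.1) (hx3 : A.1 < v.1) (hx4 : v.1 < E.1)
    (hchord : 0 < det3 A v E) (hneg : det3 u v w < 0) : False := by
  obtain ⟨m, hmseg, hm1, hm2⟩ := segpt u w v.1 hx1 hx2
  obtain ⟨g, hgseg, hg1, hg2⟩ := segpt A E v.1 hx3 hx4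
  have hmhull : m ∈ convexHull ℝ P :=
    (convex_convexHull ℝ P).segment_subset hu hw hmseg
  have hghull : g ∈ convexHull ℝ P :=
    (convex_convexHull ℝ P).segment_subset hA hE hgseg
  refine sandwich hv hmhull hghull hm1 hg1 ?_ ?_
  · rw [det3_eq] at hneg
    nlinarith [hm2]
  · rw [det3_eq] at hchord
    nlinarith [hg2]

set_option maxHeartbeats 2000000 in
/-- For x-sorted points `p 1, …, p n` in general position, counterclockwise
around `p 1`: a 5-hole `{p a, p b, p c, p d, p e}` (with
`2 ≤ a < b < c < d < e ≤ n`) whose three middle points lie strictly below the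
line through `p a` and `p e` (i.e. the triples `(p a, p b, p e)`,
`(p a, p c, p e)`, `(p a, p d, p e)` are positively oriented) yields a 6-hole
of the whole point set. -/
theorem five_hole_below_line_gives_6hole (n : ℕ) (p : ℕ → ℝ × ℝ)
    (hgp : InGenPos (p '' Set.Icc 1 n))
    (hx : ∀ i j : ℕ, 1 ≤ i → i < j → j ≤ n → (p i).1 < (p j).1)
    (hccw : ∀ a b : ℕ, 2 ≤ a → a < b → b ≤ n → det3 (p 1) (p a) (p b) > 0)
    (a b c d e : ℕ) (ha : 2 ≤ a) (hab : a < b) (hbc : b < c) (hcd : c < d)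
    (hde : d < e) (hen : e ≤ n)
    (hhole : IsHole 5 (p '' Set.Icc 1 n) {p a, p b, p c, p d, p e})
    (h1 : det3 (p a) (p b) (p e) > 0)
    (h2 : det3 (p a) (p c) (p e) > 0)
    (h3 : det3 (p a) (p d) (p e) > 0) :
    ∃ P : Set (ℝ × ℝ), IsHole 6 (p '' Set.Icc 1 n) P := by
  obtain ⟨⟨hsub5, hfin5, hcard5, hext5⟩, hempty5⟩ := hhole
  set S : Set (ℝ × ℝ) := p '' Set.Icc 1 n with hSdef
  set Pent : Set (ℝ × ℝ) := {p a, p b, p c, p d, p e} with hPentdef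
  -- basic memberships
  have mS : ∀ i : ℕ, 1 ≤ i → i ≤ n → p i ∈ S := fun i hi1 hi2 => ⟨i, ⟨hi1, hi2⟩, rfl⟩
  have pne : ∀ i j : ℕ, 1 ≤ i → i < j → j ≤ n → p i ≠ p j := by
    intro i j hi hij hj heq
    have := hx i j hi hij hj
    rw [heq] at this
    exact lt_irrefl _ this
  have gpne : ∀ i j k : ℕ, 1 ≤ i → i < j → j < k → k ≤ n →
      det3 (p i) (p j) (p k) ≠ 0 := by
    intro i j k hi hij hjk hk h0
    exact hgp (p i) (mS i hi (by omega)) (p j) (mS j (by omega) (by omega))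
      (p k) (mS k (by omega) hk) (pne i j hi hij (by omega))
      (pne i k hi (by omega) hk) (pne j k (by omega) hjk hk)
      (collinear_of_det3 h0)
  have maP : p a ∈ Pent := by simp [hPentdef]
  have mbP : p b ∈ Pent := by simp [hPentdef]
  have mcP : p c ∈ Pent := by simp [hPentdef]
  have mdP : p d ∈ Pent := by simp [hPentdef]
  have meP : p e ∈ Pent := by simp [hPentdef]
  -- pentagon orientation facts
  have key : ∀ i j k : ℕ, a ≤ i → i < j → j < k → k ≤ e →
      p i ∈ Pent → p j ∈ Pent → p k ∈ Pent → 0 < det3 (p a) (p j) (p e) →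
      0 < det3 (p i) (p j) (p k) := by
    intro i j k hai hij hjk hke hiP hjP hkP hchord
    rcases lt_trichotomy (det3 (p i) (p j) (p k)) 0 with hlt | heq | hgt
    · exact (mid_pos (hext5 (p j) hjP) (subset_convexHull ℝ Pent hiP)
        (subset_convexHull ℝ Pent hkP) (subset_convexHull ℝ Pent maP)
        (subset_convexHull ℝ Pent meP)
        (hx i j (by omega) hij (by omega)) (hx j k (by omega) hjk (by omega))
        (hx a j (by omega) (by omega) (by omega))
        (hx j e (by omega) (by omega) (by omega)) hchord hlt).elim
    · exact absurd heq (gpne i j k (by omega) hij hjk (by omega))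
    · exact hgt
  have Tabc := key a b c le_rfl hab hbc (by omega) maP mbP mcP h1
  have Tabd := key a b d le_rfl hab (by omega) (by omega) maP mbP mdP h1
  have Tacd := key a c d le_rfl (by omega) hcd (by omega) maP mcP mdP h2
  have Tbcd := key b c d (by omega) hbc hcd (by omega) mbP mcP mdP h2
  have Tbce := key b c e (by omega) hbc (by omega) le_rfl mbP mcP meP h2
  have Tbde := key b d e (by omega) (by omega) hde le_rfl mbP mdP meP h3
  have Tcde := key c d e (by omega) hcd hde le_rfl mcP mdP meP h3
  -- the chord functional is ≤ 0 on the pentagon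
  have fb : det3 (p a) (p e) (p b) ≤ 0 := by rw [det3_swap]; linarith
  have fc : det3 (p a) (p e) (p c) ≤ 0 := by rw [det3_swap]; linarith
  have fd : det3 (p a) (p e) (p d) ≤ 0 := by rw [det3_swap]; linarith
  have LF : ∀ x ∈ Pent, det3 (p a) (p e) x ≤ 0 := by
    intro x hxm
    simp only [hPentdef, Set.mem_insert_iff, Set.mem_singleton_iff] at hxm
    rcases hxm with rfl | rfl | rfl | rfl | rfl
    · exact le_of_eq (det3_self₁ _ _)
    · exact fb
    · exact fc
    · exact fd
    · exact le_of_eq (det3_self₂ _ _)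
  -- the point q : minimizer of the chord functional over the triangle p1 pa pe
  set Tri : Set (ℝ × ℝ) := {p 1, p a, p e} with hTridef
  have hSfin : S.Finite := Set.Finite.image p (Set.finite_Icc 1 n)
  set Q : Set (ℝ × ℝ) :=
    {x | x ∈ S ∧ x ∈ convexHull ℝ Tri ∧ 0 < det3 (p a) (p e) x} with hQdef
  have hQfin : Q.Finite := hSfin.subset fun x hxm => hxm.1
  have hp1Q : p 1 ∈ Q := by
    refine ⟨mS 1 le_rfl (by omega), subset_convexHull ℝ Tri (by simp [hTridef]), ?_⟩
    rw [← det3_cyc]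
    exact hccw a e ha (by omega) hen
  obtain ⟨q, hqQ, hqmin⟩ :=
    Set.exists_min_image Q (fun x => det3 (p a) (p e) x) hQfin ⟨p 1, hp1Q⟩
  obtain ⟨hqS, hqTri, hqf⟩ := hqQ
  -- decompose q as a convex combination over the triangle
  have hqTri' := hqTri
  rw [hTridef, convexHull_insert ⟨p a, by simp⟩, mem_convexJoin] at hqTri'
  obtain ⟨x1, hx1m, z, hzm, hqseg⟩ := hqTri'
  rw [Set.mem_singleton_iff] at hx1m
  subst hx1m
  rw [convexHull_pair] at hzm
  obtain ⟨γ, δ, hγ, hδ, hγδ, hzeq⟩ := hzm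
  obtain ⟨α, β, hα, hβ, hαβ, hqeq⟩ := hqseg
  have hfz : det3 (p a) (p e) z = 0 := by
    rw [← hzeq, det3_affine _ _ _ _ _ _ hγδ, det3_self₁, det3_self₂]; ring
  have hfp1 : 0 < det3 (p a) (p e) (p 1) := by
    rw [← det3_cyc]; exact hccw a e ha (by omega) hen
  have hfqeq : det3 (p a) (p e) q = α * det3 (p a) (p e) (p 1) := by
    rw [← hqeq, det3_affine _ _ _ _ _ _ hαβ, hfz]; ring
  have hα0 : 0 < α := by
    by_contra hcon
    push_neg at hcon
    linarith only [hqf, hfqeq, mul_nonpos_of_nonpos_of_nonneg hcon hfp1.le]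
  have qfact : ∀ u v : ℝ × ℝ, 0 < det3 u v (p 1) → 0 ≤ det3 u v (p a) →
      0 ≤ det3 u v (p e) → 0 < det3 u v q := by
    intro u v hu1 hua hue
    have hz' : 0 ≤ det3 u v z := by
      rw [← hzeq, det3_affine _ _ _ _ _ _ hγδ]
      linarith only [mul_nonneg hγ hua, mul_nonneg hδ hue]
    rw [← hqeq, det3_affine _ _ _ _ _ _ hαβ]
    linarith only [mul_nonneg hβ hz', mul_pos hα0 hu1]
  -- the ten q-orientation facts
  have cyc1 : ∀ u v w : ℝ × ℝ, 0 < det3 u v w → 0 < det3 v w u := by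
    intro u v w h; rw [← det3_cyc]; exact h
  have Qab : 0 < det3 (p a) (p b) q := by
    refine qfact _ _ ?_ (le_of_eq (det3_self₁ _ _).symm) h1.le
    exact cyc1 _ _ _ (hccw a b ha hab (by omega))
  have Qac : 0 < det3 (p a) (p c) q := by
    refine qfact _ _ ?_ (le_of_eq (det3_self₁ _ _).symm) h2.le
    exact cyc1 _ _ _ (hccw a c ha (by omega) (by omega))
  have Qad : 0 < det3 (p a) (p d) q := by
    refine qfact _ _ ?_ (le_of_eq (det3_self₁ _ _).symm) h3.le
    exact cyc1 _ _ _ (hccw a d ha (by omega) (by omega))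
  have Qae : 0 < det3 (p a) (p e) q := hqf
  have Qbc : 0 < det3 (p b) (p c) q := by
    refine qfact _ _ ?_ ?_ Tbce.le
    · exact cyc1 _ _ _ (hccw b c (by omega) hbc (by omega))
    · exact (cyc1 _ _ _ Tabc).le
  have Qbd : 0 < det3 (p b) (p d) q := by
    refine qfact _ _ ?_ ?_ Tbde.le
    · exact cyc1 _ _ _ (hccw b d (by omega) (by omega) (by omega))
    · exact (cyc1 _ _ _ Tabd).le
  have Qbe : 0 < det3 (p b) (p e) q := by
    refine qfact _ _ ?_ ?_ (le_of_eq (det3_self₂ _ _).symm)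
    · exact cyc1 _ _ _ (hccw b e (by omega) (by omega) hen)
    · exact (cyc1 _ _ _ h1).le
  have Qcd : 0 < det3 (p c) (p d) q := by
    refine qfact _ _ ?_ ?_ Tcde.le
    · exact cyc1 _ _ _ (hccw c d (by omega) hcd (by omega))
    · exact (cyc1 _ _ _ Tacd).le
  have Qce : 0 < det3 (p c) (p e) q := by
    refine qfact _ _ ?_ ?_ (le_of_eq (det3_self₂ _ _).symm)
    · exact cyc1 _ _ _ (hccw c e (by omega) (by omega) hen)
    · exact (cyc1 _ _ _ h2).le
  have Qde : 0 < det3 (p d) (p e) q := by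
    refine qfact _ _ ?_ ?_ (le_of_eq (det3_self₂ _ _).symm)
    · exact cyc1 _ _ _ (hccw d e (by omega) hde hen)
    · exact (cyc1 _ _ _ h3).le
  -- distinctness of q from pentagon points
  have hqneP : ∀ x : ℝ × ℝ, det3 (p a) (p e) x ≤ 0 → x ≠ q := by
    intro x hle heq
    rw [heq] at hle
    linarith only [hle, hqf]
  have haq : p a ≠ q := hqneP _ (le_of_eq (det3_self₁ _ _))
  have hbq : p b ≠ q := hqneP _ fb
  have hcq : p c ≠ q := hqneP _ fc
  have hdq : p d ≠ q := hqneP _ fd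
  have heq' : p e ≠ q := hqneP _ (le_of_eq (det3_self₂ _ _))
  -- the hexagon
  set P6 : Set (ℝ × ℝ) := {p a, p b, p c, p d, p e, q} with hP6def
  have hPentsub : Pent ⊆ P6 := by
    intro x hxm
    simp only [hPentdef, Set.mem_insert_iff, Set.mem_singleton_iff] at hxm
    simp only [hP6def, Set.mem_insert_iff, Set.mem_singleton_iff]
    tauto
  have hP6eq : P6 = insert q Pent := by
    rw [hP6def, hPentdef]
    ext x
    simp only [Set.mem_insert_iff, Set.mem_singleton_iff]
    tauto
  -- edge functionals are nonnegative on the hexagon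
  have Lqa : ∀ x ∈ P6, 0 ≤ det3 q (p a) x := by
    intro x hxm
    simp only [hP6def, Set.mem_insert_iff, Set.mem_singleton_iff] at hxm
    rcases hxm with rfl | rfl | rfl | rfl | rfl | rfl
    · exact le_of_eq (det3_self₂ _ _).symm
    · rw [det3_cyc]; exact Qab.le
    · rw [det3_cyc]; exact Qac.le
    · rw [det3_cyc]; exact Qad.le
    · rw [det3_cyc]; exact Qae.le
    · exact le_of_eq (det3_self₁ _ _).symm
  have Lab : ∀ x ∈ P6, 0 ≤ det3 (p a) (p b) x := by
    intro x hxm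
    simp only [hP6def, Set.mem_insert_iff, Set.mem_singleton_iff] at hxm
    rcases hxm with rfl | rfl | rfl | rfl | rfl | rfl
    · exact le_of_eq (det3_self₁ _ _).symm
    · exact le_of_eq (det3_self₂ _ _).symm
    · exact Tabc.le
    · exact Tabd.le
    · exact h1.le
    · exact Qab.le
  have Lbc : ∀ x ∈ P6, 0 ≤ det3 (p b) (p c) x := by
    intro x hxm
    simp only [hP6def, Set.mem_insert_iff, Set.mem_singleton_iff] at hxm
    rcases hxm with rfl | rfl | rfl | rfl | rfl | rfl
    · rw [det3_cyc, det3_cyc]; exact Tabc.le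
    · exact le_of_eq (det3_self₁ _ _).symm
    · exact le_of_eq (det3_self₂ _ _).symm
    · exact Tbcd.le
    · exact Tbce.le
    · exact Qbc.le
  have Lcd : ∀ x ∈ P6, 0 ≤ det3 (p c) (p d) x := by
    intro x hxm
    simp only [hP6def, Set.mem_insert_iff, Set.mem_singleton_iff] at hxm
    rcases hxm with rfl | rfl | rfl | rfl | rfl | rfl
    · rw [det3_cyc, det3_cyc]; exact Tacd.le
    · rw [det3_cyc, det3_cyc]; exact Tbcd.le
    · exact le_of_eq (det3_self₁ _ _).symm
    · exact le_of_eq (det3_self₂ _ _).symm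
    · exact Tcde.le
    · exact Qcd.le
  have Lde : ∀ x ∈ P6, 0 ≤ det3 (p d) (p e) x := by
    intro x hxm
    simp only [hP6def, Set.mem_insert_iff, Set.mem_singleton_iff] at hxm
    rcases hxm with rfl | rfl | rfl | rfl | rfl | rfl
    · rw [det3_cyc, det3_cyc]; exact h3.le
    · rw [det3_cyc, det3_cyc]; exact Tbde.le
    · rw [det3_cyc, det3_cyc]; exact Tcde.le
    · exact le_of_eq (det3_self₁ _ _).symm
    · exact le_of_eq (det3_self₂ _ _).symm
    · exact Qde.le
  have Leq : ∀ x ∈ P6, 0 ≤ det3 (p e) q x := by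
    intro x hxm
    simp only [hP6def, Set.mem_insert_iff, Set.mem_singleton_iff] at hxm
    rcases hxm with rfl | rfl | rfl | rfl | rfl | rfl
    · rw [det3_cyc, det3_cyc]; exact Qae.le
    · rw [det3_cyc, det3_cyc]; exact Qbe.le
    · rw [det3_cyc, det3_cyc]; exact Qce.le
    · rw [det3_cyc, det3_cyc]; exact Qde.le
    · exact le_of_eq (det3_self₁ _ _).symm
    · exact le_of_eq (det3_self₂ _ _).symm
  -- cardinality
  have hcard : P6.ncard = 6 := by
    rw [hP6def]
    rw [Set.ncard_insert_of_notMem, Set.ncard_insert_of_notMem,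
      Set.ncard_insert_of_notMem, Set.ncard_insert_of_notMem,
      Set.ncard_insert_of_notMem, Set.ncard_singleton]
    · simp only [Set.mem_singleton_iff]; exact heq'
    · simp only [Set.mem_insert_iff, Set.mem_singleton_iff]
      push_neg
      exact ⟨pne d e (by omega) hde hen, hdq⟩
    · simp only [Set.mem_insert_iff, Set.mem_singleton_iff]
      push_neg
      exact ⟨pne c d (by omega) hcd (by omega), pne c e (by omega) (by omega) hen, hcq⟩
    · simp only [Set.mem_insert_iff, Set.mem_singleton_iff]
      push_neg
      exact ⟨pne b c (by omega) hbc (by omega), pne b d (by omega) (by omega) (by omega),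
        pne b e (by omega) (by omega) hen, hbq⟩
    · simp only [Set.mem_insert_iff, Set.mem_singleton_iff]
      push_neg
      exact ⟨pne a b (by omega) hab (by omega), pne a c (by omega) (by omega) (by omega),
        pne a d (by omega) (by omega) (by omega), pne a e (by omega) (by omega) hen, haq⟩
  refine ⟨P6, ⟨?_, ?_, hcard, ?_⟩, ?_⟩
  · -- subset
    intro x hxm
    simp only [hP6def, Set.mem_insert_iff, Set.mem_singleton_iff] at hxm
    rcases hxm with rfl | rfl | rfl | rfl | rfl | rfl
    · exact mS a (by omega) (by omega)
    · exact mS b (by omega) (by omega)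
    · exact mS c (by omega) (by omega)
    · exact mS d (by omega) (by omega)
    · exact mS e (by omega) hen
    · exact hqS
  · -- finiteness
    rw [hP6def]
    exact (Set.finite_singleton q).insert _ |>.insert _ |>.insert _ |>.insert _ |>.insert _
  · -- convex position
    intro x hxm
    simp only [hP6def, Set.mem_insert_iff, Set.mem_singleton_iff] at hxm
    rcases hxm with rfl | rfl | rfl | rfl | rfl | rfl
    · exact extreme_of_edges (by simp [hP6def]) Lqa Lab
        (by rw [det3_cyc]; exact Qab.ne')
    · exact extreme_of_edges (by simp [hP6def]) Lab Lbc Tabc.ne'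
    · exact extreme_of_edges (by simp [hP6def]) Lbc Lcd Tbcd.ne'
    · exact extreme_of_edges (by simp [hP6def]) Lcd Lde Tcde.ne'
    · exact extreme_of_edges (by simp [hP6def]) Lde Leq Qde.ne'
    · exact extreme_of_edges (by simp [hP6def]) Leq Lqa
        (by rw [det3_cyc, det3_cyc]; exact Qae.ne')
  · -- emptiness
    intro r hrS hrhull
    rw [hP6eq, convexHull_insert ⟨p a, maP⟩, mem_convexJoin] at hrhull
    obtain ⟨q₀, hq₀, z', hz', hrseg⟩ := hrhull
    rw [Set.mem_singleton_iff] at hq₀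
    rw [hq₀] at hrseg
    obtain ⟨u', v', hu'0, hv'0, huv', hreq⟩ := hrseg
    have hu'v : u' = 1 - v' := by linarith only [huv']
    subst hu'v
    rcases eq_or_lt_of_le hv'0 with hv'z | hv'pos
    · -- r = q
      rw [← hv'z] at hreq
      simp only [sub_zero, one_smul, zero_smul, add_zero] at hreq
      rw [← hreq]
      simp [hP6def]
    have hr1 : (1 - v') * q.1 + v' * z'.1 = r.1 := by
      have := congrArg Prod.fst hreq
      simpa [Prod.fst_add, Prod.smul_fst] using this
    have hr2 : (1 - v') * q.2 + v' * z'.2 = r.2 := by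
      have := congrArg Prod.snd hreq
      simpa [Prod.snd_add, Prod.smul_snd] using this
    have hfz' : det3 (p a) (p e) z' ≤ 0 :=
      convexHull_min LF (convex_det_le (p a) (p e) 0) hz'
    have hfr : det3 (p a) (p e) r =
        (1 - v') * det3 (p a) (p e) q + v' * det3 (p a) (p e) z' := by
      rw [← hreq, det3_affine _ _ _ _ _ _ (by ring : (1 - v') + v' = 1)]
    have hden : 0 < det3 (p a) (p e) q - det3 (p a) (p e) z' := by
      linarith only [hqf, hfz']
    set σ : ℝ := det3 (p a) (p e) q / (det3 (p a) (p e) q - det3 (p a) (p e) z')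
      with hσdef
    have hσ1 : σ * (det3 (p a) (p e) q - det3 (p a) (p e) z') =
        det3 (p a) (p e) q := by
      rw [hσdef]; field_simp
    have hσpos : 0 < σ := div_pos hqf hden
    have hσle : σ ≤ 1 := by rw [hσdef, div_le_one hden]; linarith only [hfz']
    set w : ℝ × ℝ := (1 - σ) • q + σ • z' with hwdef
    have hfw : det3 (p a) (p e) w = 0 := by
      rw [hwdef, det3_affine _ _ _ _ _ _ (by ring : (1 - σ) + σ = 1)]
      linear_combination -hσ1
    have hae1 : (p a).1 < (p e).1 := hx a e (by omega) (by omega) hen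
    have haene : (p e).1 - (p a).1 ≠ 0 := by linarith only [hae1]
    set τ : ℝ := (w.1 - (p a).1) / ((p e).1 - (p a).1) with hτdef
    have hτ1 : τ * ((p e).1 - (p a).1) = w.1 - (p a).1 := by
      rw [hτdef]; field_simp
    have hwcomb : (1 - τ) • (p a) + τ • (p e) = w := by
      have hfw' := hfw
      rw [det3_eq] at hfw'
      apply Prod.ext
      · simp only [Prod.fst_add, Prod.smul_fst, smul_eq_mul]
        linear_combination hτ1
      · simp only [Prod.snd_add, Prod.smul_snd, smul_eq_mul]
        have hzero : ((1 - τ) * (p a).2 + τ * (p e).2 - w.2) *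
            ((p e).1 - (p a).1) = 0 := by
          linear_combination ((p e).2 - (p a).2) * hτ1 - hfw'
        rcases mul_eq_zero.mp hzero with hz0 | hz0
        · linarith only [hz0]
        · exact absurd hz0 haene
    -- bounds on τ
    have hz'qa : 0 ≤ det3 q (p a) z' :=
      convexHull_min (fun x hxm => Lqa x (hPentsub hxm)) (convex_det_ge q (p a) 0) hz'
    have hz'eq : 0 ≤ det3 (p e) q z' :=
      convexHull_min (fun x hxm => Leq x (hPentsub hxm)) (convex_det_ge (p e) q 0) hz'
    have hwqa : det3 q (p a) w = σ * det3 q (p a) z' := by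
      rw [hwdef, det3_affine _ _ _ _ _ _ (by ring : (1 - σ) + σ = 1), det3_self₁]
      ring
    have hweq : det3 (p e) q w = σ * det3 (p e) q z' := by
      rw [hwdef, det3_affine _ _ _ _ _ _ (by ring : (1 - σ) + σ = 1), det3_self₂]
      ring
    have hwqa2 : det3 q (p a) w = τ * det3 (p a) (p e) q := by
      rw [← hwcomb, det3_affine _ _ _ _ _ _ (by ring : (1 - τ) + τ = 1), det3_self₂,
        det3_cyc q (p a) (p e), det3_cyc (p a) (p e) q]
      ring
    have hweq2 : det3 (p e) q w = (1 - τ) * det3 (p a) (p e) q := by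
      rw [← hwcomb, det3_affine _ _ _ _ _ _ (by ring : (1 - τ) + τ = 1), det3_self₁,
        det3_cyc (p e) q (p a), det3_cyc q (p a) (p e)]
      ring
    have hτ0 : 0 ≤ τ := by
      have h0 : 0 ≤ τ * det3 (p a) (p e) q := by
        rw [← hwqa2, hwqa]; exact mul_nonneg hσpos.le hz'qa
      by_contra hcon
      push_neg at hcon
      linarith only [h0, mul_pos (neg_pos.mpr hcon) hqf]
    have hτle : τ ≤ 1 := by
      have h0 : 0 ≤ (1 - τ) * det3 (p a) (p e) q := by
        rw [← hweq2, hweq]; exact mul_nonneg hσpos.le hz'eq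
      by_contra hcon
      push_neg at hcon
      linarith only [h0, mul_pos (sub_pos.mpr hcon) hqf]
    have hwseg : w ∈ segment ℝ (p a) (p e) :=
      ⟨1 - τ, τ, by linarith only [hτle], hτ0, by ring, hwcomb⟩
    have hwPent : w ∈ convexHull ℝ Pent :=
      (convex_convexHull ℝ Pent).segment_subset (subset_convexHull ℝ Pent maP)
        (subset_convexHull ℝ Pent meP) hwseg
    rcases le_or_gt (det3 (p a) (p e) r) 0 with hfrle | hfrpos
    · -- r lies in the pentagon hull
      rcases hfz'.lt_or_eq with hfz'lt | hfz'eq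
      · have hσlt : σ < 1 := by rw [hσdef, div_lt_one hden]; linarith only [hfz'lt]
        have hv'σ : σ ≤ v' := by
          by_contra hcon
          push_neg at hcon
          linarith only [mul_pos (sub_pos.mpr hcon) hden, hσ1, hfr, hfrle]
        have h1σ : (1 : ℝ) - σ ≠ 0 := ne_of_gt (by linarith only [hσlt])
        set μ : ℝ := (v' - σ) / (1 - σ) with hμdef
        have hμ1 : μ * (1 - σ) = v' - σ := by rw [hμdef]; field_simp
        have hμ0 : 0 ≤ μ := div_nonneg (by linarith only [hv'σ])
          (by linarith only [hσlt])
        have hμle : μ ≤ 1 := by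
          rw [hμdef, div_le_one (by linarith only [hσlt])]
          linarith only [hu'0]
        have hcomb : (1 - μ) • w + μ • z' = r := by
          rw [hwdef]
          apply Prod.ext
          · simp only [Prod.fst_add, Prod.smul_fst, smul_eq_mul]
            linear_combination hr1 + (z'.1 - q.1) * hμ1
          · simp only [Prod.snd_add, Prod.smul_snd, smul_eq_mul]
            linear_combination hr2 + (z'.2 - q.2) * hμ1
        have hrPent : r ∈ convexHull ℝ Pent :=
          (convex_convexHull ℝ Pent).segment_subset hwPent hz'
            ⟨1 - μ, μ, by linarith only [hμle], hμ0, by ring, hcomb⟩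
        exact hPentsub (hempty5 r hrS hrPent)
      · -- fz' = 0 : then v' = 1 and r = z'
        have hv'1 : v' = 1 := by
          have hge : 1 ≤ v' := by
            by_contra hcon
            push_neg at hcon
            rw [hfz'eq] at hfr
            linarith only [mul_pos (sub_pos.mpr hcon) hqf, hfr, hfrle]
          linarith only [hge, hu'0]
        have hrz : r = z' := by
          rw [← hreq, hv'1]
          simp
        rw [hrz]
        exact hPentsub (hempty5 z' (hrz ▸ hrS) hz')
    · -- r lies in the triangle hull : contradiction with minimality
      exfalso
      have hv'σ : v' < σ := by
        by_contra hcon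
        push_neg at hcon
        linarith only [mul_nonneg (sub_nonneg.mpr hcon) hden.le, hσ1, hfr, hfrpos]
      have hσne : σ ≠ 0 := ne_of_gt hσpos
      set ν : ℝ := v' / σ with hνdef
      have hν1 : ν * σ = v' := by rw [hνdef]; field_simp
      have hν0 : 0 ≤ ν := div_nonneg hv'pos.le hσpos.le
      have hνle : ν ≤ 1 := by rw [hνdef, div_le_one hσpos]; linarith only [hv'σ]
      have hcomb : (1 - ν) • q + ν • w = r := by
        rw [hwdef]
        apply Prod.ext
        · simp only [Prod.fst_add, Prod.smul_fst, smul_eq_mul]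
          linear_combination hr1 + (z'.1 - q.1) * hν1
        · simp only [Prod.snd_add, Prod.smul_snd, smul_eq_mul]
          linear_combination hr2 + (z'.2 - q.2) * hν1
      have hwTri : w ∈ convexHull ℝ Tri :=
        (convex_convexHull ℝ Tri).segment_subset
          (subset_convexHull ℝ Tri (by simp [hTridef]))
          (subset_convexHull ℝ Tri (by simp [hTridef])) hwseg
      have hrTri : r ∈ convexHull ℝ Tri :=
        (convex_convexHull ℝ Tri).segment_subset hqTri hwTri
          ⟨1 - ν, ν, by linarith only [hνle], hν0, by ring, hcomb⟩
      have hrQ : r ∈ Q := ⟨hrS, hrTri, hfrpos⟩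
      have hmin : det3 (p a) (p e) q ≤ det3 (p a) (p e) r := hqmin r hrQ
      linarith only [hmin, hfr, mul_pos hv'pos hden]
end

section
/- The explicit set of 29 points in ℝ² with integer coordinates (1,1260), (16,743), (22,531), (37,0), (306,592), (310,531), (366,552), (371,487), (374,525), (392,575), (396,613), (410,539), (416,550), (426,526), (434,552), (436,535), (446,565), (449,518), (450,498), (453,542), (458,526), (489,537), (492,502), (496,579), (516,467), (552,502), (754,697), (777,194), (1259,320) is in general position and contains no 6-hole. (Overmars's witness for h(6) ≥ 30.) -/
/-- Overmars's explicit set of 29 points. -/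
def overmarsSet : Set (ℝ × ℝ) :=
  {(1, 1260), (16, 743), (22, 531), (37, 0), (306, 592), (310, 531),
   (366, 552), (371, 487), (374, 525), (392, 575), (396, 613), (410, 539),
   (416, 550), (426, 526), (434, 552), (436, 535), (446, 565), (449, 518),
   (450, 498), (453, 542), (458, 526), (489, 537), (492, 502), (496, 579),
   (516, 467), (552, 502), (754, 697), (777, 194), (1259, 320)}

namespace OvermarsAux

def ptsZ : List (ℤ × ℤ) :=
  [(1, 1260), (16, 743), (22, 531), (37, 0), (306, 592), (310, 531),
   (366, 552), (371, 487), (374, 525), (392, 575), (396, 613), (410, 539),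
   (416, 550), (426, 526), (434, 552), (436, 535), (446, 565), (449, 518),
   (450, 498), (453, 542), (458, 526), (489, 537), (492, 502), (496, 579),
   (516, 467), (552, 502), (754, 697), (777, 194), (1259, 320)]

def dz (a b c : ℤ × ℤ) : ℤ :=
  (b.1 - a.1) * (c.2 - a.2) - (b.2 - a.2) * (c.1 - a.1)

def sg : ℤ → Bool × Bool
  | .ofNat 0 => (false, false)
  | .ofNat (_ + 1) => (true, false)
  | .negSucc _ => (false, true)

def inTri (a b c q : ℤ × ℤ) : Bool :=
  match sg (dz a b q), sg (dz b c q), sg (dz c a q) with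
  | (p1, n1), (p2, n2), (p3, n3) => !((p1 || p2 || p3) && (n1 || n2 || n3))

def emptyTri (a b c : ℤ × ℤ) : Bool :=
  ptsZ.all fun q => q == a || q == b || q == c || !(inTri a b c q)

def okExt (chosen : List (ℤ × ℤ)) (x : ℤ × ℤ) : Bool :=
  chosen.all fun a => chosen.all fun b => a == b || emptyTri a b x

def search : ℕ → List (ℤ × ℤ) → List (ℤ × ℤ) → Bool
  | 0, _, _ => false
  | _ + 1, _, [] => true
  | k + 1, chosen, x :: rest =>
      (if okExt chosen x then search k (x :: chosen) rest else true) &&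
      search (k + 1) chosen rest

set_option maxHeartbeats 4000000 in
theorem noHexB : search 6 [] ptsZ = true := by decide

set_option maxHeartbeats 4000000 in
theorem genposZ : ∀ a ∈ ptsZ, ∀ b ∈ ptsZ, ∀ c ∈ ptsZ,
    a ≠ b → a ≠ c → b ≠ c → dz a b c ≠ 0 := by decide

theorem ptsZ_nodup : ptsZ.Nodup := by decide

/-! ### search soundness -/

def goodChain : List (ℤ × ℤ) → List (ℤ × ℤ) → Prop
  | _, [] => True
  | chosen, x :: l => okExt chosen x = true ∧ goodChain (x :: chosen) l

theorem search_sound : ∀ (rest : List (ℤ × ℤ)) (k : ℕ) (chosen l : List (ℤ × ℤ)),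
    search k chosen rest = true → l.Sublist rest → l.length = k →
    goodChain chosen l → False := by
  intro rest
  induction rest with
  | nil =>
    intro k chosen l hs hsub hlen _
    rw [List.sublist_nil.1 hsub] at hlen
    subst hlen
    simp [search] at hs
  | cons x rest ih =>
    intro k chosen l hs hsub hlen hgc
    match k, hlen with
    | 0, hlen =>
      simp [search] at hs
    | k + 1, hlen =>
      rw [search, Bool.and_eq_true] at hs
      rcases List.sublist_cons_iff.1 hsub with h | ⟨r, rfl, hr⟩
      · exact ih (k + 1) chosen l hs.2 h hlen hgc
      · obtain ⟨hok, hgc'⟩ := hgc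
        rw [if_pos hok] at hs
        exact ih k (x :: chosen) r hs.1 hr (by simpa using hlen) hgc'

theorem goodChain_of_allEmpty : ∀ (l chosen : List (ℤ × ℤ)),
    (∀ a ∈ chosen ++ l, ∀ b ∈ chosen ++ l, ∀ c ∈ chosen ++ l,
      a ≠ b → a ≠ c → b ≠ c → emptyTri a b c = true) →
    (chosen ++ l).Nodup → goodChain chosen l := by
  intro l
  induction l with
  | nil => intro chosen _ _; trivial
  | cons x l ih =>
    intro chosen hemp hnd
    have hperm : (chosen ++ x :: l).Perm ((x :: chosen) ++ l) := List.perm_middle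
    have hxnotin : x ∉ chosen := by
      have := hnd
      rw [List.nodup_append] at this
      intro hx
      exact this.2.2 x hx x List.mem_cons_self rfl
    constructor
    · rw [okExt, List.all_eq_true]
      intro a ha
      rw [List.all_eq_true]
      intro b hb
      rcases eq_or_ne a b with rfl | hab
      · simp
      · have h := hemp a (by simp [ha]) b (by simp [hb]) x (by simp) hab
          (fun h => hxnotin (h ▸ ha)) (fun h => hxnotin (h ▸ hb))
        simp [h]
    · apply ih (x :: chosen)
      · intro a ha b hb c hc
        exact hemp a (hperm.symm.subset ha) b (hperm.symm.subset hb) c (hperm.symm.subset hc)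
      · exact hperm.nodup_iff.1 hnd

theorem noSixEmpty (l : List (ℤ × ℤ)) (hsub : l.Sublist ptsZ) (hlen : l.length = 6)
    (hemp : ∀ a ∈ l, ∀ b ∈ l, ∀ c ∈ l, a ≠ b → a ≠ c → b ≠ c → emptyTri a b c = true) :
    False := by
  apply search_sound ptsZ 6 [] l noHexB hsub hlen
  apply goodChain_of_allEmpty
  · simpa using hemp
  · simpa using hsub.nodup ptsZ_nodup

/-! ### The map to the real plane -/

noncomputable def fR (p : ℤ × ℤ) : ℝ × ℝ := ((p.1 : ℝ), (p.2 : ℝ))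

theorem fR_inj : Function.Injective fR := by
  intro p q h
  have h1 : (p.1 : ℝ) = q.1 := congrArg Prod.fst h
  have h2 : (p.2 : ℝ) = q.2 := congrArg Prod.snd h
  exact Prod.ext (by exact_mod_cast h1) (by exact_mod_cast h2)

theorem det3_eq (p q r : ℝ × ℝ) :
    det3 p q r = (q.1 - p.1) * (r.2 - p.2) - (q.2 - p.2) * (r.1 - p.1) := by
  simp [det3, Matrix.det_fin_three]; ring

theorem det3_fR (a b c : ℤ × ℤ) : det3 (fR a) (fR b) (fR c) = (dz a b c : ℝ) := by
  rw [det3_eq]; simp only [fR, dz]; push_cast; ring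

set_option maxHeartbeats 2000000 in
theorem overmars_eq : overmarsSet = fR '' {z | z ∈ ptsZ} := by
  have h : {z : ℤ × ℤ | z ∈ ptsZ} =
      ({(1, 1260), (16, 743), (22, 531), (37, 0), (306, 592), (310, 531),
        (366, 552), (371, 487), (374, 525), (392, 575), (396, 613), (410, 539),
        (416, 550), (426, 526), (434, 552), (436, 535), (446, 565), (449, 518),
        (450, 498), (453, 542), (458, 526), (489, 537), (492, 502), (496, 579),
        (516, 467), (552, 502), (754, 697), (777, 194), (1259, 320)} : Set (ℤ × ℤ)) := by
    ext z; simp [ptsZ]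
  rw [h]
  simp only [Set.image_insert_eq, Set.image_singleton, fR]
  rw [overmarsSet]
  push_cast
  rfl

theorem mem_overmars {x : ℝ × ℝ} : x ∈ overmarsSet ↔ ∃ z ∈ ptsZ, fR z = x := by
  rw [overmars_eq]
  simp [Set.mem_image]

theorem overmars_ncard : overmarsSet.ncard = 29 := by
  rw [overmars_eq]
  rw [Set.ncard_image_of_injective _ fR_inj]
  have h : {z : ℤ × ℤ | z ∈ ptsZ} = ↑ptsZ.toFinset := by ext z; simp
  rw [h, Set.ncard_coe_finset, List.toFinset_card_of_nodup ptsZ_nodup]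
  rfl

theorem collinear_det3 {p q r : ℝ × ℝ}
    (h : Collinear ℝ ({p, q, r} : Set (ℝ × ℝ))) : det3 p q r = 0 := by
  obtain ⟨v, hv⟩ := (collinear_iff_of_mem (Set.mem_insert p {q, r})).1 h
  obtain ⟨tq, hq⟩ := hv q (by simp)
  obtain ⟨tr, hr⟩ := hv r (by simp)
  have hq1 : q.1 = tq * v.1 + p.1 := by rw [hq]; rfl
  have hq2 : q.2 = tq * v.2 + p.2 := by rw [hq]; rfl
  have hr1 : r.1 = tr * v.1 + p.1 := by rw [hr]; rfl
  have hr2 : r.2 = tr * v.2 + p.2 := by rw [hr]; rfl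
  rw [det3_eq, hq1, hq2, hr1, hr2]
  ring

theorem inTri_spec {a b c q : ℤ × ℤ} (h : inTri a b c q = true) :
    (0 ≤ dz a b q ∧ 0 ≤ dz b c q ∧ 0 ≤ dz c a q) ∨
      (dz a b q ≤ 0 ∧ dz b c q ≤ 0 ∧ dz c a q ≤ 0) := by
  have hs : ∀ s : ℤ, sg s = (decide (0 < s), decide (s < 0)) := by
    rintro ((_ | n) | n)
    · rfl
    · have h0 : (0 : ℤ) < Int.ofNat (n + 1) := Int.natCast_pos.2 (Nat.succ_pos n)
      have h1 : ¬ (Int.ofNat (n + 1) < 0) := not_lt.2 h0.le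
      have hr : sg (Int.ofNat (n + 1)) = (true, false) := rfl
      rw [hr, decide_eq_true h0, decide_eq_false h1]
    · have h1 : Int.negSucc n < 0 := Int.negSucc_lt_zero n
      have h0 : ¬ ((0 : ℤ) < Int.negSucc n) := not_lt.2 h1.le
      have hr : sg (Int.negSucc n) = (false, true) := rfl
      rw [hr, decide_eq_false h0, decide_eq_true h1]
  have tri : ∀ u v w : ℤ,
      (!((decide (0 < u) || decide (0 < v) || decide (0 < w)) &&
        (decide (u < 0) || decide (v < 0) || decide (w < 0)))) = true →
      ((0 ≤ u ∧ 0 ≤ v ∧ 0 ≤ w) ∨ (u ≤ 0 ∧ v ≤ 0 ∧ w ≤ 0)) := by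
    intro u v w h
    simp only [Bool.not_eq_true', Bool.and_eq_false_iff, Bool.or_eq_false_iff,
      decide_eq_false_iff_not, not_lt] at h
    omega
  rw [inTri, hs, hs, hs] at h
  exact tri _ _ _ h

theorem combo_mem_hull (x y z w : ℝ × ℝ) (w1 w2 w3 : ℝ) (h1 : 0 ≤ w1) (h2 : 0 ≤ w2)
    (h3 : 0 ≤ w3) (hsum : w1 + w2 + w3 = 1)
    (hx : w1 * x.1 + w2 * y.1 + w3 * z.1 = w.1)
    (hy : w1 * x.2 + w2 * y.2 + w3 * z.2 = w.2) :
    w ∈ convexHull ℝ ({x, y, z} : Set (ℝ × ℝ)) := by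
  have hws : (0 : ℝ) < ∑ i : Fin 3, ![w1, w2, w3] i := by
    rw [Fin.sum_univ_three]; simp; linarith
  have hmem : (Finset.univ : Finset (Fin 3)).centerMass ![w1, w2, w3] ![x, y, z] ∈
      convexHull ℝ ({x, y, z} : Set (ℝ × ℝ)) :=
    Finset.centerMass_mem_convexHull _ (fun i _ => by fin_cases i <;> simpa) hws
      (fun i _ => by fin_cases i <;> simp)
  have heq : (Finset.univ : Finset (Fin 3)).centerMass ![w1, w2, w3] ![x, y, z] = w := by
    rw [Finset.centerMass_eq_of_sum_1 _ _ (by rw [Fin.sum_univ_three]; simpa using hsum)]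
    rw [Fin.sum_univ_three]
    simp only [Matrix.cons_val_zero, Matrix.cons_val_one, Matrix.head_cons,
      Matrix.cons_val_two, Matrix.tail_cons]
    apply Prod.ext
    · simpa using hx
    · simpa using hy
  rwa [heq] at hmem

theorem mem_hull_of_inTri {a b c q : ℤ × ℤ} (hD : dz a b c ≠ 0) (h : inTri a b c q = true) :
    fR q ∈ convexHull ℝ ({fR a, fR b, fR c} : Set (ℝ × ℝ)) := by
  have hsumZ : dz b c q + dz c a q + dz a b q = dz a b c := by simp only [dz]; ring
  have hxZ : dz b c q * a.1 + dz c a q * b.1 + dz a b q * c.1 = dz a b c * q.1 := by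
    simp only [dz]; ring
  have hyZ : dz b c q * a.2 + dz c a q * b.2 + dz a b q * c.2 = dz a b c * q.2 := by
    simp only [dz]; ring
  have hDR : ((dz a b c : ℝ)) ≠ 0 := Int.cast_ne_zero.2 hD
  have key : ∀ s1 s2 s3 : ℝ, s1 = dz b c q → s2 = dz c a q → s3 = dz a b q →
      0 ≤ s1 / (dz a b c : ℝ) → 0 ≤ s2 / (dz a b c : ℝ) → 0 ≤ s3 / (dz a b c : ℝ) →
      fR q ∈ convexHull ℝ ({fR a, fR b, fR c} : Set (ℝ × ℝ)) := by
    rintro s1 s2 s3 rfl rfl rfl hn1 hn2 hn3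
    apply combo_mem_hull _ _ _ _ _ _ _ hn1 hn2 hn3
    · field_simp
      exact_mod_cast hsumZ
    · show _ = (q.1 : ℝ)
      have hxR : (dz b c q : ℝ) * a.1 + (dz c a q : ℝ) * b.1 + (dz a b q : ℝ) * c.1 =
          (dz a b c : ℝ) * q.1 := by exact_mod_cast hxZ
      field_simp [fR]
      simp only [fR]
      linarith [hxR]
    · show _ = (q.2 : ℝ)
      have hyR : (dz b c q : ℝ) * a.2 + (dz c a q : ℝ) * b.2 + (dz a b q : ℝ) * c.2 =
          (dz a b c : ℝ) * q.2 := by exact_mod_cast hyZ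
      field_simp [fR]
      simp only [fR]
      linarith [hyR]
  rcases inTri_spec h with ⟨h1, h2, h3⟩ | ⟨h1, h2, h3⟩
  · -- all dets ≥ 0, so dz a b c = sum > 0
    have hDpos : (0 : ℝ) < (dz a b c : ℝ) := by
      rcases hD.lt_or_gt with hlt | hlt
      · exfalso; linarith [hsumZ, h1, h2, h3, hlt]
      · exact_mod_cast hlt
    exact key _ _ _ rfl rfl rfl (div_nonneg (by exact_mod_cast h2) hDpos.le)
      (div_nonneg (by exact_mod_cast h3) hDpos.le) (div_nonneg (by exact_mod_cast h1) hDpos.le)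
  · have hDneg : ((dz a b c : ℝ)) < 0 := by
      rcases hD.lt_or_gt with hlt | hlt
      · exact_mod_cast hlt
      · exfalso; linarith [hsumZ, h1, h2, h3, hlt]
    have hdiv : ∀ s : ℤ, s ≤ 0 → 0 ≤ (s : ℝ) / (dz a b c : ℝ) := by
      intro s hsle
      rw [div_nonneg_iff]
      exact Or.inr ⟨by exact_mod_cast hsle, hDneg.le⟩
    exact key _ _ _ rfl rfl rfl (hdiv _ h2) (hdiv _ h3) (hdiv _ h1)

theorem extreme_not_in_diff {P : Set (ℝ × ℝ)} {x : ℝ × ℝ}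
    (hx : x ∈ Set.extremePoints ℝ (convexHull ℝ P)) :
    x ∉ convexHull ℝ (P \ {x}) := by
  have h := (convex_convexHull ℝ P).mem_extremePoints_iff_mem_diff_convexHull_diff.1 hx
  intro hmem
  exact h.2 (convexHull_mono (Set.diff_subset_diff_left (subset_convexHull ℝ P)) hmem)

end OvermarsAux

open OvermarsAux in
/-- Overmars's 29-point set is a set of 29 points in general position
containing no 6-hole (witness for `h(6) ≥ 30`). -/
theorem overmarsSet_genpos_no_6hole :
    overmarsSet.ncard = 29 ∧ InGenPos overmarsSet ∧
      ¬ ∃ P : Set (ℝ × ℝ), IsHole 6 overmarsSet P := by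
  refine ⟨overmars_ncard, ?_, ?_⟩
  · -- general position
    intro p hp q hq r hr hpq hpr hqr hcol
    obtain ⟨a, ha, rfl⟩ := mem_overmars.1 hp
    obtain ⟨b, hb, rfl⟩ := mem_overmars.1 hq
    obtain ⟨c, hc, rfl⟩ := mem_overmars.1 hr
    have hab : a ≠ b := fun h => hpq (by rw [h])
    have hac : a ≠ c := fun h => hpr (by rw [h])
    have hbc : b ≠ c := fun h => hqr (by rw [h])
    have hdz : dz a b c ≠ 0 := genposZ a ha b hb c hc hab hac hbc
    have h0 := collinear_det3 hcol
    rw [det3_fR] at h0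
    exact hdz (by exact_mod_cast h0)
  · rintro ⟨P, ⟨⟨hPS, hPfin, hP6, hext⟩, hempty⟩⟩
    classical
    set l := ptsZ.filter (fun z => decide (fR z ∈ P)) with hl
    have hsub : l.Sublist ptsZ := List.filter_sublist
    have hmeml : ∀ z, z ∈ l ↔ z ∈ ptsZ ∧ fR z ∈ P := by
      intro z; simp [hl, List.mem_filter]
    have hnd : l.Nodup := hsub.nodup ptsZ_nodup
    have hPeq : P = fR '' {z | z ∈ l} := by
      ext x
      constructor
      · intro hx
        obtain ⟨z, hz, rfl⟩ := mem_overmars.1 (hPS hx)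
        exact ⟨z, (hmeml z).2 ⟨hz, hx⟩, rfl⟩
      · rintro ⟨z, hz, rfl⟩
        exact ((hmeml z).1 hz).2
    have hlen : l.length = 6 := by
      have h1 : P.ncard = l.length := by
        rw [hPeq]
        have h2 : {z : ℤ × ℤ | z ∈ l} = ↑l.toFinset := by ext z; simp
        rw [h2, Set.ncard_image_of_injective _ fR_inj, Set.ncard_coe_finset,
          List.toFinset_card_of_nodup hnd]
      rw [← h1, hP6]
    refine noSixEmpty l hsub hlen ?_
    intro a ha b hb c hc hab hac hbc
    rw [emptyTri, List.all_eq_true]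
    intro z hz
    by_cases hza : z = a
    · simp [hza]
    by_cases hzb : z = b
    · simp [hzb]
    by_cases hzc : z = c
    · simp [hzc]
    cases hzin : inTri a b c z with
    | false => simp [hza, hzb, hzc, hzin]
    | true =>
    exfalso
    -- geometric contradiction
    have haP : fR a ∈ P := ((hmeml a).1 ha).2
    have hbP : fR b ∈ P := ((hmeml b).1 hb).2
    have hcP : fR c ∈ P := ((hmeml c).1 hc).2
    have hdz : dz a b c ≠ 0 :=
      genposZ a (hsub.subset ha) b (hsub.subset hb) c (hsub.subset hc) hab hac hbc
    have hzhull := mem_hull_of_inTri hdz hzin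
    have hzS : fR z ∈ overmarsSet := mem_overmars.2 ⟨z, hz, rfl⟩
    have htriP : ({fR a, fR b, fR c} : Set (ℝ × ℝ)) ⊆ P := by
      intro x hx
      simp only [Set.mem_insert_iff, Set.mem_singleton_iff] at hx
      rcases hx with rfl | rfl | rfl <;> assumption
    have hzP : fR z ∈ P := hempty _ hzS (convexHull_mono htriP hzhull)
    have hne : ∀ w : ℤ × ℤ, z ≠ w → fR z ≠ fR w := fun w hw h => hw (fR_inj h)
    have htriP' : ({fR a, fR b, fR c} : Set (ℝ × ℝ)) ⊆ P \ {fR z} := by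
      intro x hx
      simp only [Set.mem_insert_iff, Set.mem_singleton_iff] at hx
      rcases hx with rfl | rfl | rfl
      · exact ⟨haP, fun h => hne a hza (Set.mem_singleton_iff.1 h).symm⟩
      · exact ⟨hbP, fun h => hne b hzb (Set.mem_singleton_iff.1 h).symm⟩
      · exact ⟨hcP, fun h => hne c hzc (Set.mem_singleton_iff.1 h).symm⟩
    exact extreme_not_in_diff (hext _ hzP) (convexHull_mono htriP' hzhull)
end
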